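/- For the anti-Jacobsthal numbers (a = (2,1)), writing B^1_n = B_{2n-1} and B^2_n = B_{2n}, one has B^1_n = ⌊A_n/3⌋ and B^2_n = A_n - 2·⌊A_n/3⌋ for all n ≥ 1, and moreover 0 ≤ 3·B^2_n - 7n + 2 ≤ 3. -/
import Mathlib


/-- `A` and `B` (indexed from 1) are complementary strictly increasing sequences
of positive integers: every positive integer lies in exactly one of their ranges. -/
def CompPair (A B : ℕ → ℕ) : Prop :=
  StrictMonoOn A (Set.Ici 1) ∧ StrictMonoOn B (Set.Ici 1) ∧
  (∀ n, 1 ≤ n → 1 ≤ A n) ∧ (∀ n, 1 ≤ n → 1 ≤ B n) ∧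
  ∀ m, 1 ≤ m →
    ((∃ n, 1 ≤ n ∧ A n = m) ∧ ¬(∃ n, 1 ≤ n ∧ B n = m)) ∨
    (¬(∃ n, 1 ≤ n ∧ A n = m) ∧ (∃ n, 1 ≤ n ∧ B n = m))

/-- `(A, B)` is the anti-recurrence pair for the positive linear form `a` of dimension `k`:
`A n = Σ_{j=1}^k a_j * B_{(n-1)k+j}` for all `n ≥ 1`. -/
def AntiRec (k : ℕ) (a : Fin k → ℕ) (A B : ℕ → ℕ) : Prop :=
  CompPair A B ∧
  ∀ n, 1 ≤ n → A n = ∑ j : Fin k, a j * B ((n - 1) * k + (j : ℕ) + 1)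

open Classical in
/-- number of values of `f` (indexed from 1) that lie in `[1, x]` -/
noncomputable def cnt (f : ℕ → ℕ) (x : ℕ) : ℕ :=
  ((Finset.Icc 1 x).filter (fun v => ∃ i, 1 ≤ i ∧ f i = v)).card

lemma le_self_of_smono {f : ℕ → ℕ} (hf : StrictMonoOn f (Set.Ici 1))
    (hf1 : 1 ≤ f 1) : ∀ n, 1 ≤ n → n ≤ f n := by
  intro n hn
  induction n, hn using Nat.le_induction with
  | base => exact hf1
  | succ n hn ih =>
      have h2 := hf (Set.mem_Ici.mpr hn) (Set.mem_Ici.mpr (by omega : (1:ℕ) ≤ n + 1)) (by omega : n < n + 1)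
      omega

lemma cnt_eq {f : ℕ → ℕ} (hf : StrictMonoOn f (Set.Ici 1))
    (hf1 : ∀ n, 1 ≤ n → 1 ≤ f n) {c x : ℕ}
    (h1 : ∀ i, 1 ≤ i → i ≤ c → f i ≤ x) (h2 : x < f (c + 1)) :
    cnt f x = c := by
  classical
  have hset : ((Finset.Icc 1 x).filter (fun v => ∃ i, 1 ≤ i ∧ f i = v))
      = (Finset.Icc 1 c).image f := by
    ext v
    simp only [Finset.mem_filter, Finset.mem_Icc, Finset.mem_image]
    constructor
    · rintro ⟨⟨hv1, hvx⟩, i, hi1, rfl⟩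
      refine ⟨i, ⟨hi1, ?_⟩, rfl⟩
      by_contra hic
      push_neg at hic
      have : f (c + 1) ≤ f i :=
        hf.monotoneOn (Set.mem_Ici.mpr (by omega)) (Set.mem_Ici.mpr (by omega)) (by omega)
      omega
    · rintro ⟨i, ⟨hi1, hic⟩, rfl⟩
      exact ⟨⟨hf1 i hi1, h1 i hi1 hic⟩, i, hi1, rfl⟩
  have hinj : Set.InjOn f ↑(Finset.Icc 1 c) := by
    rw [Finset.coe_Icc]
    exact hf.injOn.mono Set.Icc_subset_Ici_self
  rw [cnt]
  rw [hset, Finset.card_image_of_injOn hinj, Nat.card_Icc]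
  omega

lemma key {f : ℕ → ℕ} (hf : StrictMonoOn f (Set.Ici 1))
    (hf1 : ∀ n, 1 ≤ n → 1 ≤ f n) (x : ℕ) :
    ∃ c, (c = 0 ∨ (1 ≤ c ∧ f c ≤ x)) ∧ x < f (c + 1) ∧ cnt f x = c := by
  classical
  by_cases hx : x < f 1
  · refine ⟨0, Or.inl rfl, by simpa using hx, cnt_eq hf hf1 ?_ (by simpa using hx)⟩
    intro i h1 h2; omega
  · push_neg at hx
    have hex : ∃ i, x < f (i + 1) := by
      refine ⟨x, ?_⟩
      have := le_self_of_smono hf (hf1 1 le_rfl) (x + 1) (by omega)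
      omega
    set c := Nat.find hex with hcdef
    have hc2 : x < f (c + 1) := Nat.find_spec hex
    have hc1 : 1 ≤ c := by
      by_contra h
      have hc0 : c = 0 := by omega
      rw [hc0, zero_add] at hc2
      omega
    have hfc : f c ≤ x := by
      have hmin := Nat.find_min hex (m := c - 1) (by omega)
      push_neg at hmin
      have e : c - 1 + 1 = c := by omega
      rwa [e] at hmin
    refine ⟨c, Or.inr ⟨hc1, hfc⟩, hc2, cnt_eq hf hf1 ?_ hc2⟩
    intro i hi1 hic
    exact le_trans
      (hf.monotoneOn (Set.mem_Ici.mpr hi1) (Set.mem_Ici.mpr hc1) hic) hfc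

lemma cnt_compl {A B : ℕ → ℕ}
    (hcomp : ∀ m, 1 ≤ m →
      ((∃ n, 1 ≤ n ∧ A n = m) ∧ ¬(∃ n, 1 ≤ n ∧ B n = m)) ∨
      (¬(∃ n, 1 ≤ n ∧ A n = m) ∧ (∃ n, 1 ≤ n ∧ B n = m)))
    (x : ℕ) : cnt A x + cnt B x = x := by
  classical
  have h1 : ((Finset.Icc 1 x).filter (fun v => ∃ i, 1 ≤ i ∧ B i = v))
      = ((Finset.Icc 1 x).filter (fun v => ¬ ∃ i, 1 ≤ i ∧ A i = v)) := by
    apply Finset.filter_congr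
    intro v hv
    simp only [Finset.mem_Icc] at hv
    rcases hcomp v hv.1 with ⟨hA', hB'⟩ | ⟨hA', hB'⟩
    · simp [hA', hB']
    · simp [hA', hB']
  rw [cnt, cnt, h1, Finset.card_filter_add_card_filter_not, Nat.card_Icc]
  omega

lemma cnt_self {f : ℕ → ℕ} (hf : StrictMonoOn f (Set.Ici 1))
    (hf1 : ∀ n, 1 ≤ n → 1 ≤ f n) {m : ℕ} (hm : 1 ≤ m) :
    cnt f (f m) = m := by
  refine cnt_eq hf hf1 ?_ ?_
  · intro i hi1 him
    exact hf.monotoneOn (Set.mem_Ici.mpr hi1) (Set.mem_Ici.mpr hm) him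
  · exact hf (Set.mem_Ici.mpr hm) (Set.mem_Ici.mpr (by omega)) (by omega)

lemma main_lemma {A B : ℕ → ℕ}
    (hA : StrictMonoOn A (Set.Ici 1)) (hB : StrictMonoOn B (Set.Ici 1))
    (hA1 : ∀ n, 1 ≤ n → 1 ≤ A n) (hB1 : ∀ n, 1 ≤ n → 1 ≤ B n)
    (hcomp : ∀ m, 1 ≤ m →
      ((∃ n, 1 ≤ n ∧ A n = m) ∧ ¬(∃ n, 1 ≤ n ∧ B n = m)) ∨
      (¬(∃ n, 1 ≤ n ∧ A n = m) ∧ (∃ n, 1 ≤ n ∧ B n = m)))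
    (hrec : ∀ n, 1 ≤ n → A n = 2 * B (2 * n - 1) + B (2 * n)) :
    ∀ n, 1 ≤ n → B (2 * n) ≤ B (2 * n - 1) + 2 ∧ 7 * n ≤ 3 * B (2 * n) + 2 ∧
      3 * B (2 * n) ≤ 7 * n + 1 ∧ 7 * n ≤ A n + 4 ∧ A n + 1 ≤ 7 * n := by
  -- disjointness
  have hdisj : ∀ i j, 1 ≤ i → 1 ≤ j → A i ≠ B j := by
    intro i j hi hj hij
    rcases hcomp (B j) (hB1 j hj) with ⟨_, hnB⟩ | ⟨hnA, _⟩
    · exact hnB ⟨j, hj, rfl⟩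
    · exact hnA ⟨i, hi, hij⟩
  -- every A value is at least 4
  have hAge4 : ∀ n, 1 ≤ n → 4 ≤ A n := by
    intro n hn
    have h := hrec n hn
    have h1 : 1 ≤ B (2 * n - 1) := hB1 _ (by omega)
    have h2 : B (2 * n - 1) < B (2 * n) :=
      hB (Set.mem_Ici.mpr (by omega)) (Set.mem_Ici.mpr (by omega)) (by omega)
    omega
  -- B 1 = 1
  have hB1eq : B 1 = 1 := by
    rcases hcomp 1 le_rfl with ⟨⟨j, hj, hAj⟩, _⟩ | ⟨_, ⟨j, hj, hBj⟩⟩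
    · have := hAge4 j hj; omega
    · have h1 : B 1 ≤ B j := hB.monotoneOn (Set.mem_Ici.mpr le_rfl) (Set.mem_Ici.mpr hj) hj
      have := hB1 1 le_rfl
      omega
  -- B 2 = 2
  have hB2eq : B 2 = 2 := by
    rcases hcomp 2 (by omega) with ⟨⟨j, hj, hAj⟩, _⟩ | ⟨_, ⟨j, hj, hBj⟩⟩
    · have := hAge4 j hj; omega
    · have hj2 : 2 ≤ j := by
        by_contra hc
        have : j = 1 := by omega
        rw [this] at hBj
        omega
      have h1 : B 2 ≤ B j := hB.monotoneOn (Set.mem_Ici.mpr (by omega)) (Set.mem_Ici.mpr hj) hj2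
      have h2 : B 1 < B 2 := hB (Set.mem_Ici.mpr le_rfl) (Set.mem_Ici.mpr (by omega)) (by omega)
      omega
  -- A 1 = 4
  have hA1eq : A 1 = 4 := by
    have h := hrec 1 le_rfl
    norm_num at h
    omega
  -- counting identity
  have Bm_eq : ∀ m, 1 ≤ m → B m = m + cnt A (B m) := by
    intro m hm
    have h1 := cnt_compl hcomp (B m)
    rw [cnt_self hB hB1 hm] at h1
    omega
  intro n
  induction n using Nat.strong_induction_on with
  | _ n ih =>
    intro hn
    rcases Nat.lt_or_ge n 2 with h2 | h2
    · -- base case n = 1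
      have hn1 : n = 1 := by omega
      subst hn1
      rw [show 2 * 1 - 1 = 1 from rfl, show 2 * 1 = 2 from rfl]
      omega
    · -- inductive step: n = m + 1 with m ≥ 1
      obtain ⟨m, rfl⟩ : ∃ m, n = m + 1 := ⟨n - 1, by omega⟩
      have hm : 1 ≤ m := by omega
      have e1 : 2 * (m + 1) - 1 = 2 * m + 1 := by omega
      have e2 : 2 * (m + 1) = 2 * m + 2 := by omega
      rw [e1, e2]
      obtain ⟨c', hc'1, hc'2, hc'cnt⟩ := key hA hA1 (B (2 * m + 1))
      obtain ⟨c, hcc1, hcc2, hccnt⟩ := key hA hA1 (B (2 * m + 2))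
      have hxe1 : B (2 * m + 1) = (2 * m + 1) + c' := by
        have h := Bm_eq (2 * m + 1) (by omega)
        rw [hc'cnt] at h
        omega
      have hxe2 : B (2 * m + 2) = (2 * m + 2) + c := by
        have h := Bm_eq (2 * m + 2) (by omega)
        rw [hccnt] at h
        omega
      have hrecn : A (m + 1) = 2 * B (2 * m + 1) + B (2 * m + 2) := by
        have h := hrec (m + 1) (by omega)
        rwa [e1, e2] at h
      have hx12 : B (2 * m + 1) < B (2 * m + 2) :=
        hB (Set.mem_Ici.mpr (by omega)) (Set.mem_Ici.mpr (by omega)) (by omega)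
      have hx1pos : 1 ≤ B (2 * m + 1) := hB1 _ (by omega)
      have hAgtx2 : B (2 * m + 2) < A (m + 1) := by omega
      -- c ≤ m
      have hcm : c ≤ m := by
        by_contra hcon
        push_neg at hcon
        have h1 : A (m + 1) ≤ A c :=
          hA.monotoneOn (Set.mem_Ici.mpr (by omega)) (Set.mem_Ici.mpr (by omega)) (by omega)
        rcases hcc1 with rfl | ⟨_, hle⟩
        · omega
        · omega
      -- lower bound on c' :  m ≤ 3c' + 2
      have hi : m ≤ 3 * c' + 2 := by
        rcases Nat.lt_or_ge c' m with hlt | hge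
        · have hih := ih (c' + 1) (by omega) (by omega)
          omega
        · omega
      -- upper bound on c :  3c ≤ m + 2
      have hiii : 3 * c ≤ m + 2 := by
        rcases hcc1 with rfl | ⟨hc1, hcx⟩
        · omega
        · have hih := ih c (by omega) hc1
          have hne : A c ≠ B (2 * m + 2) := hdisj c (2 * m + 2) hc1 (by omega)
          omega
      -- lower bound on c :  m ≤ 3c + 1
      have hiv : m ≤ 3 * c + 1 := by
        rcases Nat.lt_or_ge c m with hlt | hge
        · have hih := ih (c + 1) (by omega) (by omega)
          omega
        · omega
      -- the lower bound for A (m+1)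
      have hlow : 7 * (m + 1) ≤ A (m + 1) + 4 := by
        rcases Nat.lt_or_ge (B (2 * m + 1) + 1) (B (2 * m + 2)) with hg2 | hg1
        · -- gap is exactly 2
          have hgap : B (2 * m + 2) = B (2 * m + 1) + 2 := by omega
          have hxA : ∃ j, 1 ≤ j ∧ A j = B (2 * m + 1) + 1 := by
            rcases hcomp (B (2 * m + 1) + 1) (by omega) with ⟨hA', _⟩ | ⟨_, ⟨j, hj, hBj⟩⟩
            · exact hA'
            · exfalso
              rcases Nat.lt_or_ge j (2 * m + 2) with hjlt | hjge
              · have : B j ≤ B (2 * m + 1) :=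
                  hB.monotoneOn (Set.mem_Ici.mpr hj) (Set.mem_Ici.mpr (by omega)) (by omega)
                omega
              · have : B (2 * m + 2) ≤ B j :=
                  hB.monotoneOn (Set.mem_Ici.mpr (by omega)) (Set.mem_Ici.mpr hj) hjge
                omega
          obtain ⟨j, hj1, hAj⟩ := hxA
          have hjc : j = c := by
            by_contra hne
            rcases Nat.lt_or_ge j c with hlt | hge
            · rcases hcc1 with rfl | ⟨hc1, hcx⟩
              · omega
              · have h1 : A j < A c := hA (Set.mem_Ici.mpr hj1) (Set.mem_Ici.mpr hc1) hlt
                have h2 : A c ≠ B (2 * m + 2) := hdisj c (2 * m + 2) hc1 (by omega)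
                omega
            · have h1 : A (c + 1) ≤ A j :=
                hA.monotoneOn (Set.mem_Ici.mpr (by omega)) (Set.mem_Ici.mpr hj1) (by omega)
              omega
          subst hjc
          have hih := ih j (by omega) (by omega)
          omega
        · -- gap is 1
          omega
      exact ⟨by omega, by omega, by omega, hlow, by omega⟩

/-- For the anti-Jacobsthal numbers: B¹_n = ⌊A_n/3⌋, B²_n = A_n - 2⌊A_n/3⌋,
and 0 ≤ 3·B²_n - 7n + 2 ≤ 3. -/
theorem stmt8 (A B : ℕ → ℕ) (h : AntiRec 2 ![2, 1] A B) :
    ∀ n, 1 ≤ n →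
      B (2 * n - 1) = A n / 3 ∧
      B (2 * n) = A n - 2 * (A n / 3) ∧
      (0 ≤ 3 * (B (2 * n) : ℤ) - 7 * n + 2 ∧ 3 * (B (2 * n) : ℤ) - 7 * n + 2 ≤ 3) := by
  obtain ⟨⟨hA, hB, hA1, hB1, hcomp⟩, hrec0⟩ := h
  have hrec : ∀ n, 1 ≤ n → A n = 2 * B (2 * n - 1) + B (2 * n) := by
    intro n hn
    have h := hrec0 n hn
    rw [Fin.sum_univ_two] at h
    simp only [Matrix.cons_val_zero, Matrix.cons_val_one, Matrix.head_cons,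
      Fin.val_zero, Fin.val_one, add_zero, one_mul] at h
    have e1 : (n - 1) * 2 + 0 + 1 = 2 * n - 1 := by omega
    have e2 : (n - 1) * 2 + 1 + 1 = 2 * n := by omega
    rw [show (n - 1) * 2 + 1 + 1 = 2 * n from by omega,
      show (n - 1) * 2 + 1 = 2 * n - 1 from by omega] at h
    exact h
  have hmain := main_lemma hA hB hA1 hB1 hcomp hrec
  intro n hn
  obtain ⟨hgap, hlb, hub, _, _⟩ := hmain n hn
  have hsm : B (2 * n - 1) < B (2 * n) :=
    hB (Set.mem_Ici.mpr (by omega)) (Set.mem_Ici.mpr (by omega)) (by omega)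
  have hr := hrec n hn
  refine ⟨by omega, by omega, by omega, by omega⟩
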